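/- arXiv:2304.06003 — 2 statements merged into one kernel-verified Lean document; each statement's English description precedes it below -/
import Mathlib

section
/- Yano's lemma: for every positive integer n, the L¹ norm of the n-th Walsh–Fejér kernel K_n := (1/n) ∑_{k=1}^n D_k on the Walsh group G is at most 2, i.e. ∫_G |K_n| dμ ≤ 2. -/
open MeasureTheory Finset
open scoped ENNReal NNReal

noncomputable section

abbrev G : Type := ℕ → ZMod 2

instance : TopologicalSpace (ZMod 2) := ⊥
instance : DiscreteTopology (ZMod 2) := ⟨rfl⟩
instance : IsTopologicalAddGroup (ZMod 2) :=
  { continuous_add := continuous_of_discreteTopology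
    continuous_neg := continuous_of_discreteTopology }
instance : MeasurableSpace (ZMod 2) := ⊤
instance : BorelSpace (ZMod 2) := ⟨(borel_eq_top_of_discrete).symm⟩

/-- The normalized Haar measure on the Walsh group. -/
def μ : Measure G := Measure.addHaarMeasure ⊤

/-- Rademacher function. -/
def rad (k : ℕ) (x : G) : ℝ := if x k = 0 then 1 else -1

/-- Walsh–Paley function. -/
def walsh (n : ℕ) (x : G) : ℝ :=
  ∏ k ∈ Finset.range (n + 1), if n.testBit k then rad k x else 1

/-- Walsh–Dirichlet kernel. -/
def D (m : ℕ) (x : G) : ℝ := ∑ k ∈ Finset.range m, walsh k x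

/-- Walsh–Fejér kernel. -/
def Fejer (m : ℕ) (x : G) : ℝ := (1 / m : ℝ) * ∑ k ∈ Finset.range m, D (k + 1) x

/-- Dyadic interval `I_n`. -/
def I (n : ℕ) : Set G := {y | ∀ i < n, y i = 0}

/-- The dyadic "absolute value" on the Walsh group. -/
def absG (t : G) : ℝ := ∑' i, ((t i).val : ℝ) / 2 ^ (i + 1)

/-- The `L^p` modulus of continuity. -/
def omegaMod (p : ℝ≥0∞) (f : G → ℝ) (δ : ℝ) : ℝ≥0∞ :=
  ⨆ t ∈ {t : G | absG t < δ}, eLpNorm (fun x => f (x + t) - f x) p μ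

/-- Walsh–Fourier coefficient. -/
def wCoeff (f : G → ℝ) (k : ℕ) : ℝ := ∫ x, f x * walsh k x ∂μ

/-- Partial sum of the Walsh–Fourier series. -/
def S (m : ℕ) (f : G → ℝ) (x : G) : ℝ :=
  ∑ k ∈ Finset.range m, wCoeff f k * walsh k x


instance : μ.IsAddLeftInvariant := by unfold μ; infer_instance

lemma mu_univ : μ Set.univ = 1 := by
  have h := Measure.addHaarMeasure_self (K₀ := (⊤ : TopologicalSpace.PositiveCompacts G))
  simpa [μ] using h

def extv (m : ℕ) (c : Fin m → ZMod 2) : G := fun i => if h : i < m then c ⟨i, h⟩ else 0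

lemma extv_lt (m : ℕ) (c : Fin m → ZMod 2) (i : ℕ) (h : i < m) :
    extv m c i = c ⟨i, h⟩ := dif_pos h

lemma rad_cases (k : ℕ) (x : G) : rad k x = 1 ∨ rad k x = -1 := by
  unfold rad; split <;> simp

lemma abs_rad (k : ℕ) (x : G) : |rad k x| = 1 := by
  rcases rad_cases k x with h | h <;> rw [h] <;> norm_num

lemma walsh_prod_pad {j M N : ℕ} (hMN : M ≤ N) (hj : j < 2 ^ M) (x : G) :
    ∏ i ∈ Finset.range M, (if j.testBit i then rad i x else 1)
      = ∏ i ∈ Finset.range N, (if j.testBit i then rad i x else 1) := by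
  apply Finset.prod_subset (Finset.range_subset_range.2 hMN)
  intro i _ hi
  have hiM : M ≤ i := by simpa using hi
  have : j.testBit i = false :=
    Nat.testBit_lt_two_pow (lt_of_lt_of_le hj (Nat.pow_le_pow_right (by norm_num) hiM))
  simp [this]

lemma walsh_eq_prod {j M : ℕ} (hj : j < 2 ^ M) (x : G) :
    walsh j x = ∏ i ∈ Finset.range M, (if j.testBit i then rad i x else 1) := by
  unfold walsh
  have h1 : j < 2 ^ (j + 1) :=
    lt_of_lt_of_le (Nat.lt_two_pow_self (n := j)) (Nat.pow_le_pow_right (by norm_num) (Nat.le_succ j))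
  rw [walsh_prod_pad (le_max_left (j+1) M) h1 x,
      walsh_prod_pad (le_max_right (j+1) M) hj x]

lemma walsh_zero (x : G) : walsh 0 x = 1 := by
  simp [walsh, Nat.zero_testBit]

lemma walsh_two_pow_add {m j : ℕ} (hj : j < 2 ^ m) (x : G) :
    walsh (2 ^ m + j) x = rad m x * walsh j x := by
  have h1 : 2 ^ m + j < 2 ^ (m + 1) := by
    have : 2 ^ (m+1) = 2 ^ m + 2 ^ m := by rw [pow_succ, mul_two]
    omega
  rw [walsh_eq_prod h1 x, walsh_eq_prod hj x, Finset.prod_range_succ]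
  have hm : (2 ^ m + j).testBit m = true := by
    rw [Nat.testBit_two_pow_add_eq, Nat.testBit_lt_two_pow hj]; rfl
  have hlow : ∀ i ∈ Finset.range m,
      (if (2 ^ m + j).testBit i then rad i x else 1) = (if j.testBit i then rad i x else 1) := by
    intro i hi
    rw [Nat.testBit_two_pow_add_gt (Finset.mem_range.1 hi)]
  rw [Finset.prod_congr rfl hlow, hm]
  simp [mul_comm]

lemma D_two_pow_add {m r : ℕ} (hr : r ≤ 2 ^ m) (x : G) :
    D (2 ^ m + r) x = D (2 ^ m) x + rad m x * D r x := by
  unfold D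
  rw [Finset.sum_range_add, Finset.mul_sum]
  congr 1
  exact Finset.sum_congr rfl fun j hj =>
    walsh_two_pow_add (lt_of_lt_of_le (Finset.mem_range.1 hj) hr) x

lemma D_one (x : G) : D 1 x = 1 := by simp [D, walsh_zero]

lemma D_two_pow (m : ℕ) (x : G) : D (2 ^ m) x = ∏ i ∈ Finset.range m, (1 + rad i x) := by
  induction m with
  | zero => simpa using D_one x
  | succ m ih =>
    have h : 2 ^ (m+1) = 2 ^ m + 2 ^ m := by rw [pow_succ, mul_two]
    rw [h, D_two_pow_add le_rfl x, Finset.prod_range_succ, ih]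
    ring

lemma D_two_pow_nonneg (m : ℕ) (x : G) : 0 ≤ D (2 ^ m) x := by
  rw [D_two_pow]
  apply Finset.prod_nonneg
  intro i _
  rcases rad_cases i x with h | h <;> rw [h] <;> norm_num

def Sfun (n : ℕ) (x : G) : ℝ := ∑ k ∈ Finset.range n, D (k + 1) x

lemma Sfun_split {m q : ℕ} (hq : q ≤ 2 ^ m) (x : G) :
    Sfun (2 ^ m + q) x = Sfun (2 ^ m) x + q * D (2 ^ m) x + rad m x * Sfun q x := by
  unfold Sfun
  rw [Finset.sum_range_add]
  have h : ∀ j ∈ Finset.range q, D (2 ^ m + j + 1) x = D (2 ^ m) x + rad m x * D (j + 1) x := by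
    intro j hj
    rw [add_assoc]
    exact D_two_pow_add (by have := Finset.mem_range.1 hj; omega) x
  rw [Finset.sum_congr rfl h, Finset.sum_add_distrib, Finset.sum_const, Finset.card_range,
    Finset.mul_sum]
  push_cast [nsmul_eq_mul]
  ring

lemma Sfun_two_pow_nonneg (m : ℕ) (x : G) : 0 ≤ Sfun (2 ^ m) x := by
  induction m with
  | zero => simp [Sfun, D_one]
  | succ m ih =>
    have h : 2 ^ (m+1) = 2 ^ m + 2 ^ m := by rw [pow_succ, mul_two]
    rw [h, Sfun_split le_rfl x]
    have hD := D_two_pow_nonneg m x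
    have hpow : (0:ℝ) ≤ (2:ℝ) ^ m := by positivity
    have h2 : (0:ℝ) ≤ (2 ^ m : ℕ) * D (2 ^ m) x := by
      apply mul_nonneg (by positivity) hD
    rcases rad_cases m x with hr | hr <;> rw [hr] <;> nlinarith

lemma sum_zmod2 (f : ZMod 2 → ℝ) : ∑ a : ZMod 2, f a = f 0 + f 1 := by
  have h : (Finset.univ : Finset (ZMod 2)) = {0, 1} := by decide
  rw [h, Finset.sum_insert (by decide), Finset.sum_singleton]

lemma sum_walsh (m j : ℕ) (hj : j < 2 ^ m) :
    ∑ c : Fin m → ZMod 2, walsh j (extv m c) = if j = 0 then (2 ^ m : ℝ) else 0 := by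
  have h1 : ∀ c : Fin m → ZMod 2, walsh j (extv m c)
      = ∏ i : Fin m, (if j.testBit i then (if c i = 0 then (1:ℝ) else -1) else 1) := by
    intro c
    rw [walsh_eq_prod hj (extv m c),
      ← Fin.prod_univ_eq_prod_range (fun i => if j.testBit i then rad i (extv m c) else 1) m]
    apply Finset.prod_congr rfl
    intro i _
    have : rad (i : ℕ) (extv m c) = (if c i = 0 then (1:ℝ) else -1) := by
      unfold rad
      rw [extv_lt m c i i.isLt, Fin.eta]
    rw [this]
  rw [Finset.sum_congr rfl fun c _ => h1 c]
  rw [← Fintype.piFinset_univ,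
    ← Finset.prod_univ_sum (fun _ : Fin m => (Finset.univ : Finset (ZMod 2)))
      (fun i a => if j.testBit i then (if a = 0 then (1:ℝ) else -1) else 1)]
  by_cases hj0 : j = 0
  · subst hj0
    simp [Nat.zero_testBit, Finset.card_univ]
  · obtain ⟨i0, hbit, -⟩ := Nat.exists_most_significant_bit hj0
    have hi0 : i0 < m := by
      have h2 := Nat.ge_two_pow_of_testBit hbit
      by_contra h
      have : 2 ^ m ≤ 2 ^ i0 := Nat.pow_le_pow_right (by norm_num) (by omega)
      omega
    rw [if_neg hj0]
    apply Finset.prod_eq_zero (Finset.mem_univ (⟨i0, hi0⟩ : Fin m))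
    rw [sum_zmod2 (fun a => if j.testBit i0 then (if a = 0 then (1:ℝ) else -1) else 1)]
    simp [hbit]

lemma sum_D (m k : ℕ) (hk1 : 0 < k) (hk2 : k ≤ 2 ^ m) :
    ∑ c : Fin m → ZMod 2, D k (extv m c) = (2 ^ m : ℝ) := by
  unfold D
  rw [Finset.sum_comm]
  rw [Finset.sum_congr rfl fun j hj =>
    sum_walsh m j (lt_of_lt_of_le (Finset.mem_range.1 hj) hk2)]
  rw [Finset.sum_ite_eq' (Finset.range k) 0 (fun _ => (2 ^ m : ℝ))]
  rw [if_pos (Finset.mem_range.2 hk1)]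

lemma sum_Sfun (m r : ℕ) (hr : r ≤ 2 ^ m) :
    ∑ c : Fin m → ZMod 2, Sfun r (extv m c) = (r : ℝ) * 2 ^ m := by
  unfold Sfun
  rw [Finset.sum_comm]
  rw [Finset.sum_congr rfl fun k hk =>
    sum_D m (k+1) (Nat.succ_pos k) (by have := Finset.mem_range.1 hk; omega)]
  rw [Finset.sum_const, Finset.card_range, nsmul_eq_mul]

lemma key (m : ℕ) : ∀ n, n ≤ 2 ^ m →
    ∑ c : Fin m → ZMod 2, |Sfun n (extv m c)| ≤ 2 * (n : ℝ) * 2 ^ m := by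
  intro n
  induction n using Nat.strong_induction_on with
  | _ n ih =>
    intro hn
    rcases Nat.eq_zero_or_pos n with h0 | h0
    · subst h0; simp [Sfun]
    · set m' := n.log2 with hm'
      have h1 : 2 ^ m' ≤ n := Nat.log2_self_le h0.ne'
      have h2 : n < 2 ^ (m' + 1) := Nat.lt_log2_self
      have h2' : 2 ^ (m' + 1) = 2 ^ m' + 2 ^ m' := by rw [pow_succ, mul_two]
      set q := n - 2 ^ m' with hqdef
      have hq : q < 2 ^ m' := by omega
      have hn' : n = 2 ^ m' + q := by omega
      have hm'm : m' ≤ m :=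
        (Nat.pow_le_pow_iff_right (by norm_num)).1 (le_trans h1 hn)
      have hqm : q ≤ 2 ^ m := le_trans hq.le (Nat.pow_le_pow_right (by norm_num) hm'm)
      have hqn : q < n := by have : 0 < 2 ^ m' := Nat.pow_pos (by norm_num); omega
      have hIH := ih q hqn hqm
      have step1 : ∑ c : Fin m → ZMod 2, |Sfun n (extv m c)|
          ≤ ∑ c : Fin m → ZMod 2,
            (Sfun (2 ^ m') (extv m c) + (q : ℝ) * D (2 ^ m') (extv m c)
              + |Sfun q (extv m c)|) := by
        apply Finset.sum_le_sum
        intro c _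
        rw [hn', Sfun_split hq.le]
        set x := extv m c
        have ha := Sfun_two_pow_nonneg m' x
        have hb := D_two_pow_nonneg m' x
        have hab : 0 ≤ Sfun (2 ^ m') x + (q : ℝ) * D (2 ^ m') x :=
          add_nonneg ha (mul_nonneg (Nat.cast_nonneg q) hb)
        calc |Sfun (2 ^ m') x + (q : ℝ) * D (2 ^ m') x + rad m' x * Sfun q x|
            ≤ |Sfun (2 ^ m') x + (q : ℝ) * D (2 ^ m') x| + |rad m' x * Sfun q x| :=
              abs_add_le _ _
          _ = Sfun (2 ^ m') x + (q : ℝ) * D (2 ^ m') x + |Sfun q x| := by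
              rw [abs_of_nonneg hab, abs_mul, abs_rad, one_mul]
      have step2 : ∑ c : Fin m → ZMod 2,
            (Sfun (2 ^ m') (extv m c) + (q : ℝ) * D (2 ^ m') (extv m c)
              + |Sfun q (extv m c)|)
          = (2 ^ m' : ℝ) * 2 ^ m + (q : ℝ) * 2 ^ m
            + ∑ c : Fin m → ZMod 2, |Sfun q (extv m c)| := by
        rw [Finset.sum_add_distrib, Finset.sum_add_distrib, ← Finset.mul_sum,
          sum_Sfun m (2 ^ m') (Nat.pow_le_pow_right (by norm_num) hm'm),
          sum_D m (2 ^ m') (Nat.pow_pos (by norm_num))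
            (Nat.pow_le_pow_right (by norm_num) hm'm)]
        push_cast
        ring
      have hnat : 2 ^ m' + 3 * q ≤ 2 * n := by omega
      have hcast : (2 ^ m' : ℝ) + 3 * (q : ℝ) ≤ 2 * (n : ℝ) := by
        exact_mod_cast hnat
      have hpow : (0:ℝ) ≤ (2:ℝ) ^ m := by positivity
      calc ∑ c : Fin m → ZMod 2, |Sfun n (extv m c)|
          ≤ (2 ^ m' : ℝ) * 2 ^ m + (q : ℝ) * 2 ^ m
            + ∑ c : Fin m → ZMod 2, |Sfun q (extv m c)| := by
            rw [← step2]; exact step1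
        _ ≤ (2 ^ m' : ℝ) * 2 ^ m + (q : ℝ) * 2 ^ m + 2 * (q : ℝ) * 2 ^ m := by linarith
        _ ≤ 2 * (n : ℝ) * 2 ^ m := by nlinarith

def Cyl (m : ℕ) (c : Fin m → ZMod 2) : Set G := {x | ∀ i : Fin m, x (i : ℕ) = c i}

lemma measurableSet_Cyl (m : ℕ) (c : Fin m → ZMod 2) : MeasurableSet (Cyl m c) := by
  have h : Cyl m c = ⋂ i : Fin m, (fun x : G => x (i : ℕ)) ⁻¹' {c i} := by
    ext x; simp [Cyl, Set.mem_iInter]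
  rw [h]
  exact MeasurableSet.iInter fun i =>
    (measurable_pi_apply (i : ℕ)) (MeasurableSpace.measurableSet_top)

lemma Cyl_disjoint (m : ℕ) : Pairwise (Function.onFun Disjoint (Cyl m)) := by
  intro c c' hcc'
  rw [Function.onFun, Set.disjoint_left]
  intro x hx hx'
  apply hcc'
  funext i
  rw [← hx i, ← hx' i]

lemma iUnion_Cyl (m : ℕ) : ⋃ c : Fin m → ZMod 2, Cyl m c = Set.univ := by
  ext x
  simp only [Set.mem_iUnion, Set.mem_univ, iff_true]
  exact ⟨fun i => x (i : ℕ), fun i => rfl⟩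

lemma neg_zmod2 (a : ZMod 2) : -a = a := CharTwo.neg_eq a

lemma measure_Cyl_eq (m : ℕ) (c : Fin m → ZMod 2) : μ (Cyl m c) = μ (Cyl m 0) := by
  have h : Cyl m c = (fun x : G => extv m c + x) ⁻¹' (Cyl m 0) := by
    ext x
    simp only [Cyl, Set.mem_preimage, Set.mem_setOf_eq, Pi.add_apply, Pi.zero_apply]
    constructor
    · intro hx i
      rw [extv_lt m c (i : ℕ) i.isLt, Fin.eta, hx i]
      exact CharTwo.add_self_eq_zero _
    · intro hx i
      have := hx i
      rw [extv_lt m c (i : ℕ) i.isLt, Fin.eta] at this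
      rw [← neg_zmod2 (c i)]
      exact eq_neg_of_add_eq_zero_right this
  rw [h, measure_preimage_add]

lemma measure_Cyl (m : ℕ) (c : Fin m → ZMod 2) : μ (Cyl m c) = ((2 : ℝ≥0∞) ^ m)⁻¹ := by
  have hU := measure_iUnion (μ := μ) (Cyl_disjoint m) (measurableSet_Cyl m)
  rw [iUnion_Cyl, mu_univ, tsum_fintype] at hU
  have h2 : ∀ c' : Fin m → ZMod 2, μ (Cyl m c') = μ (Cyl m 0) := measure_Cyl_eq m
  rw [Finset.sum_congr rfl fun c' _ => h2 c', Finset.sum_const, Finset.card_univ,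
    Fintype.card_fun] at hU
  simp only [Fintype.card_fin, ZMod.card, nsmul_eq_mul, Nat.cast_pow, Nat.cast_ofNat] at hU
  rw [measure_Cyl_eq m c]
  have h0 : ((2 : ℝ≥0∞) ^ m) ≠ 0 := by positivity
  have hT : ((2 : ℝ≥0∞) ^ m) ≠ ⊤ := ENNReal.pow_ne_top ENNReal.ofNat_ne_top
  have hx : μ (Cyl m 0) = ((2 : ℝ≥0∞) ^ m)⁻¹ * ((2 : ℝ≥0∞) ^ m * μ (Cyl m 0)) := by
    rw [← mul_assoc, ENNReal.inv_mul_cancel h0 hT, one_mul]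
  rw [hx, ← hU, mul_one]

lemma lint_cyl (m : ℕ) (F : G → ℝ≥0∞)
    (hdep : ∀ x y : G, (∀ i, i < m → x i = y i) → F x = F y) :
    ∫⁻ x, F x ∂μ = (∑ c : Fin m → ZMod 2, F (extv m c)) * ((2 : ℝ≥0∞) ^ m)⁻¹ := by
  have hpt : ∀ x : G,
      F x = ∑ c : Fin m → ZMod 2, Set.indicator (Cyl m c) (fun _ => F (extv m c)) x := by
    intro x
    rw [Finset.sum_eq_single (fun i : Fin m => x (i : ℕ))]
    · rw [Set.indicator_of_mem (show x ∈ Cyl m (fun i : Fin m => x (i : ℕ)) from fun i => rfl)]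
      apply hdep
      intro i hi
      rw [extv_lt m _ i hi]
    · intro c _ hc
      apply Set.indicator_of_notMem
      intro hx
      exact hc (funext fun i => (hx i).symm)
    · intro h
      exact absurd (Finset.mem_univ _) h
  rw [lintegral_congr hpt,
    lintegral_finset_sum _ (fun c _ => measurable_const.indicator (measurableSet_Cyl m c))]
  have h1 : ∀ c : Fin m → ZMod 2,
      ∫⁻ x, Set.indicator (Cyl m c) (fun _ => F (extv m c)) x ∂μ
        = F (extv m c) * ((2 : ℝ≥0∞) ^ m)⁻¹ := by
    intro c
    rw [lintegral_indicator_const (measurableSet_Cyl m c), measure_Cyl m c]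
  rw [Finset.sum_congr rfl fun c _ => h1 c, ← Finset.sum_mul]

lemma walsh_dep {m k : ℕ} (hk : k < 2 ^ m) {x y : G} (h : ∀ i, i < m → x i = y i) :
    walsh k x = walsh k y := by
  rw [walsh_eq_prod hk x, walsh_eq_prod hk y]
  apply Finset.prod_congr rfl
  intro i hi
  have : rad i x = rad i y := by unfold rad; rw [h i (Finset.mem_range.1 hi)]
  rw [this]

lemma Fejer_dep {m n : ℕ} (hn : n ≤ 2 ^ m) {x y : G} (h : ∀ i, i < m → x i = y i) :
    Fejer n x = Fejer n y := by
  unfold Fejer D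
  congr 1
  apply Finset.sum_congr rfl
  intro k hk
  apply Finset.sum_congr rfl
  intro j hj
  have hj2 : j < 2 ^ m := by
    have := Finset.mem_range.1 hk
    have := Finset.mem_range.1 hj
    omega
  exact walsh_dep hj2 h

lemma Fejer_eq_Sfun (n : ℕ) (x : G) : Fejer n x = (1 / n : ℝ) * Sfun n x := rfl


/-- Yano's lemma: the Fejér kernels are uniformly bounded in `L¹` by 2. -/
theorem yano_lemma (n : ℕ) (hn : 0 < n) : eLpNorm (Fejer n) 1 μ ≤ 2 := by
  have hn2 : n ≤ 2 ^ n := (Nat.lt_two_pow_self (n := n)).le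
  rw [eLpNorm_one_eq_lintegral_enorm]
  simp only [enorm_eq_nnnorm]
  rw [lint_cyl n (fun x => (‖Fejer n x‖₊ : ℝ≥0∞))
    (fun x y h => by simp only [Fejer_dep hn2 h])]
  have hsum : ∑ c : Fin n → ZMod 2, ((‖Fejer n (extv n c)‖₊ : ℝ≥0∞))
      = ENNReal.ofReal (∑ c : Fin n → ZMod 2, |Fejer n (extv n c)|) := by
    rw [ENNReal.ofReal_sum_of_nonneg (fun c _ => abs_nonneg _)]
    exact Finset.sum_congr rfl fun c _ => Real.enorm_eq_ofReal_abs _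
  have hreal : ∑ c : Fin n → ZMod 2, |Fejer n (extv n c)| ≤ 2 * 2 ^ n := by
    have hk := key n n hn2
    have hf : ∀ c : Fin n → ZMod 2,
        |Fejer n (extv n c)| = (1 / n : ℝ) * |Sfun n (extv n c)| := by
      intro c
      rw [Fejer_eq_Sfun, abs_mul, abs_of_nonneg (by positivity : (0:ℝ) ≤ 1 / (n:ℝ))]
    rw [Finset.sum_congr rfl fun c _ => hf c, ← Finset.mul_sum]
    have hnR : (0:ℝ) < n := by exact_mod_cast hn
    calc (1 / (n:ℝ)) * ∑ c : Fin n → ZMod 2, |Sfun n (extv n c)|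
        ≤ (1 / (n:ℝ)) * (2 * (n:ℝ) * 2 ^ n) := by
          apply mul_le_mul_of_nonneg_left hk (by positivity)
      _ = 2 * 2 ^ n := by field_simp
  have hb : (∑ c : Fin n → ZMod 2, ((‖Fejer n (extv n c)‖₊ : ℝ≥0∞)))
      ≤ (2 : ℝ≥0∞) * 2 ^ n := by
    rw [hsum]
    calc ENNReal.ofReal (∑ c : Fin n → ZMod 2, |Fejer n (extv n c)|)
        ≤ ENNReal.ofReal (2 * 2 ^ n) := ENNReal.ofReal_le_ofReal hreal
      _ = (2 : ℝ≥0∞) * 2 ^ n := by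
          rw [ENNReal.ofReal_mul (by norm_num), ENNReal.ofReal_pow (by norm_num)]
          norm_num
  calc (∑ c : Fin n → ZMod 2, ((‖Fejer n (extv n c)‖₊ : ℝ≥0∞))) * ((2 : ℝ≥0∞) ^ n)⁻¹
      ≤ ((2 : ℝ≥0∞) * 2 ^ n) * ((2 : ℝ≥0∞) ^ n)⁻¹ := mul_le_mul_left hb _
    _ = 2 := by
        rw [mul_assoc, ENNReal.mul_inv_cancel (by positivity) (ENNReal.pow_ne_top ENNReal.ofNat_ne_top),
          mul_one]
end
end

section
/- For every positive integer n, every real-valued Walsh polynomial g of order less than 2^n (i.e. g = ∑_{k=0}^{2^n-1} a_k w_k), every f ∈ L^p(G) with 1 ≤ p < ∞, the function x ↦ ∫_G r_n(t) g(t) (f(x+t) − f(x)) dμ(t) has L^p norm at most (1/2) ‖g‖₁ · ω_p(f, 2^{-n}), where ω_p(f, δ) := sup_{|t| < δ} ‖f(·+t) − f(·)‖_p and |t| := ∑_{i=0}^∞ t_i 2^{-(i+1)}. -/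
open MeasureTheory Finset
open scoped ENNReal NNReal

noncomputable section

section Aux

instance : IsProbabilityMeasure μ :=
  ⟨by rw [show μ = Measure.addHaarMeasure ⊤ from rfl, ← TopologicalSpace.PositiveCompacts.coe_top (α := G)]
      exact Measure.addHaarMeasure_self⟩

instance inst_s4 : μ.IsAddLeftInvariant := by
  rw [show μ = Measure.addHaarMeasure ⊤ from rfl]
  infer_instance

lemma measurable_rad (k : ℕ) : Measurable (rad k) :=
  (measurable_from_top (f := fun v : ZMod 2 => if v = 0 then (1:ℝ) else -1)).comp
    (measurable_pi_apply k)

lemma measurable_walsh (k : ℕ) : Measurable (walsh k) := by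
  apply Finset.measurable_prod
  intro j _
  by_cases h : k.testBit j <;> simp [h, measurable_rad]

lemma abs_walsh_le (k : ℕ) (x : G) : |walsh k x| ≤ 1 := by
  rw [walsh, Finset.abs_prod]
  apply Finset.prod_le_one (fun j _ => abs_nonneg _)
  intro j _
  by_cases h : k.testBit j <;> simp [h, abs_rad]

end Aux
section Aux2

variable (n : ℕ)

/-- the point with a single 1 in coordinate `n` -/
def eG (n : ℕ) : G := fun i => if i = n then 1 else 0

lemma zmod2_cases (v : ZMod 2) : v = 0 ∨ v = 1 := by revert v; decide

lemma rad_add_e (t : G) : rad n (t + eG n) = - rad n t := by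
  have h : (t + eG n) n = t n + 1 := by simp [eG]
  rcases zmod2_cases (t n) with hv | hv <;>
    simp [rad, h, hv, show (1 : ZMod 2) + 1 = 0 by decide, show (0 : ZMod 2) + 1 ≠ 0 by decide]

lemma rad_add_e' {j : ℕ} (hj : j ≠ n) (t : G) : rad j (t + eG n) = rad j t := by
  have h : (t + eG n) j = t j := by simp [eG, hj]
  simp [rad, h]

lemma walsh_add_e {k : ℕ} (hk : k < 2 ^ n) (t : G) : walsh k (t + eG n) = walsh k t := by
  unfold walsh
  refine Finset.prod_congr rfl fun j _ => ?_
  by_cases hb : k.testBit j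
  · have hj : j ≠ n := by
      rintro rfl
      rw [Nat.testBit_eq_false_of_lt hk] at hb
      exact Bool.false_ne_true hb
    simp [hb, rad_add_e' n hj]
  · simp [hb]

lemma absG_e : absG (eG n) = 1 / 2 ^ (n + 1) := by
  rw [absG]
  have h : (fun i => ((eG n i).val : ℝ) / 2 ^ (i + 1)) =
      fun i => if i = n then (1 : ℝ) / 2 ^ (n + 1) else 0 := by
    funext i
    by_cases h : i = n <;> simp [eG, h, show ((1 : ZMod 2)).val = 1 by decide]
  rw [h]
  exact tsum_ite_eq n _

lemma absG_e_lt : absG (eG n) < (2 : ℝ) ^ (-(n : ℤ)) := by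
  rw [absG_e, zpow_neg, zpow_natCast, one_div, inv_lt_inv₀ (by positivity) (by positivity)]
  exact pow_lt_pow_right₀ one_lt_two (Nat.lt_succ_self n)

end Aux2
section Jensen

open ENNReal in
lemma jensen_weighted {α : Type*} [MeasurableSpace α] (ν : Measure α) (c H : α → ℝ≥0∞)
    (hc : AEMeasurable c ν) (hH : AEMeasurable H ν) {P : ℝ} (hP : 1 ≤ P) :
    (∫⁻ t, c t * H t ∂ν) ^ P ≤ (∫⁻ t, c t ∂ν) ^ (P - 1) * ∫⁻ t, c t * H t ^ P ∂ν := by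
  rcases eq_or_lt_of_le hP with h1 | h1
  · simp [← h1]
  have hP0 : (0 : ℝ) < P := lt_trans one_pos h1
  set Q := Real.conjExponent P with hQdef
  have hpq : P.HolderConjugate Q := Real.HolderConjugate.conjExponent h1
  have hQ0 : (0 : ℝ) < Q := hpq.symm.pos
  have key : ∫⁻ t, c t * H t ∂ν ≤
      (∫⁻ t, (c t ^ (1 / P) * H t) ^ P ∂ν) ^ (1 / P) *
        (∫⁻ t, (c t ^ (1 / Q)) ^ Q ∂ν) ^ (1 / Q) := by
    refine le_trans (le_of_eq ?_)
      (ENNReal.lintegral_mul_le_Lp_mul_Lq ν hpq ((hc.pow_const _).mul hH) (hc.pow_const _))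
    refine lintegral_congr fun t => ?_
    show c t * H t = c t ^ (1 / P) * H t * c t ^ (1 / Q)
    rw [mul_right_comm, ← ENNReal.rpow_add_of_nonneg _ _ (by positivity) (by positivity),
      one_div, one_div, hpq.inv_add_inv_eq_one, ENNReal.rpow_one]
  have e1 : ∀ t, (c t ^ (1 / P) * H t) ^ P = c t * H t ^ P := by
    intro t
    rw [ENNReal.mul_rpow_of_nonneg _ _ hP0.le, ← ENNReal.rpow_mul,
      one_div_mul_cancel hP0.ne', ENNReal.rpow_one]
  have e2 : ∀ t, (c t ^ (1 / Q)) ^ Q = c t := by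
    intro t
    rw [← ENNReal.rpow_mul, one_div_mul_cancel hQ0.ne', ENNReal.rpow_one]
  simp only [e1, e2] at key
  calc (∫⁻ t, c t * H t ∂ν) ^ P
      ≤ ((∫⁻ t, c t * H t ^ P ∂ν) ^ (1 / P) * (∫⁻ t, c t ∂ν) ^ (1 / Q)) ^ P :=
        ENNReal.rpow_le_rpow key hP0.le
    _ = (∫⁻ t, c t * H t ^ P ∂ν) * (∫⁻ t, c t ∂ν) ^ ((1 / Q) * P) := by
        rw [ENNReal.mul_rpow_of_nonneg _ _ hP0.le, ← ENNReal.rpow_mul, ← ENNReal.rpow_mul,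
          one_div_mul_cancel hP0.ne', ENNReal.rpow_one]
    _ = (∫⁻ t, c t ∂ν) ^ (P - 1) * ∫⁻ t, c t * H t ^ P ∂ν := by
        rw [mul_comm]
        congr 1
        have h := hpq.inv_add_inv_eq_one
        have : (1 / Q) * P = P - 1 := by
          have hq : 1 / Q = 1 - 1 / P := by rw [one_div, one_div, eq_sub_iff_add_eq, add_comm]; exact h
          rw [hq, sub_mul, one_mul, one_div, inv_mul_cancel₀ hP0.ne']
        rw [this]

end Jensen
/-- Móricz–Siddiqi modulus estimate. -/
theorem ms_modulus_estimate (n : ℕ) (hn : 0 < n) (a : ℕ → ℝ)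
    (g : G → ℝ) (hg : g = fun t => ∑ k ∈ Finset.range (2 ^ n), a k * walsh k t)
    (p : ℝ) (hp : 1 ≤ p) (f : G → ℝ) (hf : MemLp f (ENNReal.ofReal p) μ) :
    eLpNorm (fun x => ∫ t, rad n t * g t * (f (x + t) - f x) ∂μ)
        (ENNReal.ofReal p) μ ≤
      eLpNorm g 1 μ * omegaMod (ENNReal.ofReal p) f ((2 : ℝ) ^ (-(n : ℤ))) / 2 := by
  classical
  have hp0 : (0:ℝ) < p := lt_of_lt_of_le one_pos hp
  set q : ℝ≥0∞ := ENNReal.ofReal p with hqdef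
  have hq0 : q ≠ 0 := by
    simp only [hqdef, ne_eq, ENNReal.ofReal_eq_zero, not_le]; exact hp0
  have hqt : q ≠ ∞ := ENNReal.ofReal_ne_top
  have hq1 : (1:ℝ≥0∞) ≤ q := by
    rw [hqdef, ← ENNReal.ofReal_one]; exact ENNReal.ofReal_le_ofReal hp
  have hqr : q.toReal = p := ENNReal.toReal_ofReal hp0.le
  set e : G := eG n with hedef
  -- facts about g
  have hgmeas : Measurable g := by
    rw [hg]; exact Finset.measurable_sum _ fun k _ => (measurable_walsh k).const_mul (a k)
  set B : ℝ := ∑ k ∈ Finset.range (2 ^ n), |a k| with hBdef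
  have hradnorm : ∀ t, ‖rad n t‖ = 1 := fun t => by rw [Real.norm_eq_abs, abs_rad]
  have hgbd0 : ∀ t, ‖g t‖ ≤ B := by
    intro t
    rw [hg]
    calc ‖∑ k ∈ Finset.range (2^n), a k * walsh k t‖
        ≤ ∑ k ∈ Finset.range (2^n), ‖a k * walsh k t‖ := norm_sum_le _ _
      _ ≤ B := by
          refine Finset.sum_le_sum fun k _ => ?_
          rw [norm_mul, Real.norm_eq_abs, Real.norm_eq_abs]
          calc |a k| * |walsh k t| ≤ |a k| * 1 :=
                mul_le_mul_of_nonneg_left (abs_walsh_le k t) (abs_nonneg _)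
            _ = |a k| := mul_one _
  have hgbd : ∀ t, ‖rad n t * g t‖ ≤ B := by
    intro t; rw [norm_mul, hradnorm, one_mul]; exact hgbd0 t
  have hge : ∀ t, g (t + e) = g t := by
    intro t; rw [hg]
    exact Finset.sum_congr rfl fun k hk => by
      rw [walsh_add_e n (Finset.mem_range.mp hk) t]
  -- Δ
  have hfm := hf.aestronglyMeasurable
  have hτ : MeasurePreserving (fun t : G => t + e) μ μ := measurePreserving_add_right μ e
  have hτemb : MeasurableEmbedding (fun t : G => t + e) :=
    (MeasurableEquiv.addRight e).measurableEmbedding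
  set Δ : G → ℝ := fun y => f y - f (y + e) with hΔdef
  have hΔm : AEStronglyMeasurable Δ μ :=
    hfm.sub (hfm.comp_quasiMeasurePreserving hτ.quasiMeasurePreserving)
  have hW : eLpNorm Δ q μ ≤ omegaMod q f ((2:ℝ) ^ (-(n:ℤ))) := by
    have h1 : eLpNorm Δ q μ = eLpNorm (fun x => f (x + e) - f x) q μ :=
      eLpNorm_sub_comm _ _ _ _
    rw [h1, omegaMod]
    have hmem : e ∈ {t : G | absG t < (2:ℝ) ^ (-(n:ℤ))} := absG_e_lt n
    exact le_biSup (fun t : G => eLpNorm (fun x => f (x + t) - f x) q μ) hmem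
  -- integrability
  have hfint : Integrable f μ := hf.integrable hq1
  have hshear : MeasurePreserving (fun z : G × G => z.1 + z.2) (μ.prod μ) μ := by
    have h1 := measurePreserving_prod_add μ μ
    have h2 : MeasurePreserving (Prod.snd : G × G → G) (μ.prod μ) μ :=
      ⟨measurable_snd, by rw [Measure.map_snd_prod, measure_univ, one_smul]⟩
    exact h2.comp h1
  have haeint : ∀ᵐ x ∂μ, Integrable (fun t => f (x + t)) μ := by
    have h : Integrable (fun z : G × G => f (z.1 + z.2)) (μ.prod μ) :=
      memLp_one_iff_integrable.mp
        ((memLp_one_iff_integrable.mpr hfint).comp_measurePreserving hshear)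
    exact h.prod_right_ae
  -- Step A: symmetrization
  have key : ∀ᵐ x ∂μ, ∫ t, rad n t * g t * (f (x + t) - f x) ∂μ
      = (2⁻¹ : ℝ) * ∫ t, rad n t * g t * Δ (x + t) ∂μ := by
    filter_upwards [haeint] with x hx
    set h : G → ℝ := fun t => rad n t * g t * (f (x + t) - f x) with hh
    have hint : Integrable h μ :=
      Integrable.bdd_mul (hx.sub (integrable_const (f x)))
        (((measurable_rad n).mul hgmeas).aestronglyMeasurable) (ae_of_all _ hgbd)
    have hint2 : Integrable (fun t => h (t + e)) μ :=
      memLp_one_iff_integrable.mp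
        ((memLp_one_iff_integrable.mpr hint).comp_measurePreserving hτ)
    have hcomp : ∫ t, h (t + e) ∂μ = ∫ t, h t ∂μ := hτ.integral_comp hτemb h
    have hsum : ∀ t, h t + h (t + e) = rad n t * g t * Δ (x + t) := by
      intro t
      have h1 : rad n (t + e) = - rad n t := rad_add_e n t
      have h2 : g (t + e) = g t := hge t
      have h3 : x + (t + e) = (x + t) + e := (add_assoc x t e).symm
      simp only [hh, h1, h2, h3, hΔdef]
      ring
    have heq : ∫ t, h t ∂μ = 2⁻¹ * (∫ t, h t ∂μ + ∫ t, h (t + e) ∂μ) := by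
      rw [hcomp]; ring
    rw [show (∫ t, rad n t * g t * (f (x + t) - f x) ∂μ) = ∫ t, h t ∂μ from rfl, heq,
      ← integral_add hint hint2]
    congr 1
    exact integral_congr_ae (ae_of_all _ hsum)
  -- set up ℝ≥0∞ quantities
  set c : G → ℝ≥0∞ := fun t => (‖g t‖₊ : ℝ≥0∞) with hcdef
  have hcm : Measurable c := hgmeas.nnnorm.coe_nnreal_ennreal
  set C : ℝ≥0∞ := ∫⁻ t, c t ∂μ with hCdef
  have hC : eLpNorm g 1 μ = C := eLpNorm_one_eq_lintegral_enorm
  have hCt : C ≠ ⊤ := by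
    have hb : C ≤ ∫⁻ _, ENNReal.ofReal B ∂μ := by
      refine lintegral_mono fun t => ?_
      show (‖g t‖₊ : ℝ≥0∞) ≤ _
      rw [← ENNReal.ofReal_coe_nnreal, coe_nnnorm]
      exact ENNReal.ofReal_le_ofReal (hgbd0 t)
    rw [lintegral_const, measure_univ, mul_one] at hb
    exact ne_top_of_le_ne_top ENNReal.ofReal_ne_top hb
  set W : ℝ≥0∞ := ∫⁻ y, (‖Δ y‖₊ : ℝ≥0∞) ^ p ∂μ with hWdef
  have hWe : W ^ (1/p) = eLpNorm Δ q μ := by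
    rw [eLpNorm_eq_lintegral_rpow_enorm_toReal hq0 hqt, hqr]; rfl
  have hradnn : ∀ t, (‖rad n t‖₊ : ℝ≥0∞) = 1 := by
    intro t
    have : ‖rad n t‖₊ = 1 := NNReal.coe_injective (by rw [coe_nnnorm, hradnorm]; norm_num)
    rw [this, ENNReal.coe_one]
  -- a.e. pointwise upper bound
  have hub : ∀ᵐ x ∂μ, (‖∫ t, rad n t * g t * (f (x + t) - f x) ∂μ‖₊ : ℝ≥0∞)
      ≤ 2⁻¹ * ∫⁻ t, c t * (‖Δ (x + t)‖₊ : ℝ≥0∞) ∂μ := by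
    filter_upwards [key] with x hx
    rw [hx]
    have h2 : (‖(2⁻¹ : ℝ)‖₊ : ℝ≥0∞) = 2⁻¹ := by
      rw [nnnorm_inv, ENNReal.coe_inv (by norm_num)]
      norm_num
    calc (‖(2⁻¹:ℝ) * ∫ t, rad n t * g t * Δ (x+t) ∂μ‖₊ : ℝ≥0∞)
        = 2⁻¹ * (‖∫ t, rad n t * g t * Δ (x+t) ∂μ‖₊ : ℝ≥0∞) := by
          rw [nnnorm_mul, ENNReal.coe_mul, h2]
      _ ≤ 2⁻¹ * ∫⁻ t, (‖rad n t * g t * Δ (x+t)‖₊ : ℝ≥0∞) ∂μ := by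
          exact mul_le_mul_right (enorm_integral_le_lintegral_enorm _) _
      _ = 2⁻¹ * ∫⁻ t, c t * (‖Δ (x + t)‖₊ : ℝ≥0∞) ∂μ := by
          congr 1
          refine lintegral_congr fun t => ?_
          rw [nnnorm_mul, nnnorm_mul, ENNReal.coe_mul, ENNReal.coe_mul, hradnn, one_mul, hcdef]
  -- per-x measurability of the inner integrand
  have hHm : ∀ x : G, AEMeasurable (fun t => (‖Δ (x + t)‖₊ : ℝ≥0∞)) μ := fun x =>
    (hΔm.comp_quasiMeasurePreserving
      (measurePreserving_add_left μ x).quasiMeasurePreserving).enorm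
  have hprodm : AEMeasurable
      (Function.uncurry fun x t => c t * (‖Δ (x + t)‖₊ : ℝ≥0∞) ^ p) (μ.prod μ) := by
    refine AEMeasurable.mul ?_ ?_
    · exact (hcm.comp measurable_snd).aemeasurable
    · exact ((hΔm.comp_quasiMeasurePreserving
        hshear.quasiMeasurePreserving).enorm).pow_const p
  -- main chain
  calc eLpNorm (fun x => ∫ t, rad n t * g t * (f (x + t) - f x) ∂μ) q μ
      = (∫⁻ x, (‖∫ t, rad n t * g t * (f (x + t) - f x) ∂μ‖₊ : ℝ≥0∞) ^ p ∂μ) ^ (1/p) := by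
        rw [eLpNorm_eq_lintegral_rpow_enorm_toReal hq0 hqt, hqr]; rfl
    _ ≤ (∫⁻ x, (2⁻¹ * ∫⁻ t, c t * (‖Δ (x + t)‖₊ : ℝ≥0∞) ∂μ) ^ p ∂μ) ^ (1/p) := by
        refine ENNReal.rpow_le_rpow (lintegral_mono_ae ?_) (by positivity)
        filter_upwards [hub] with x hx
        exact ENNReal.rpow_le_rpow hx hp0.le
    _ = 2⁻¹ * (∫⁻ x, (∫⁻ t, c t * (‖Δ (x + t)‖₊ : ℝ≥0∞) ∂μ) ^ p ∂μ) ^ (1/p) := by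
        have hs : ∀ J : ℝ≥0∞, (2⁻¹ * J) ^ p = 2⁻¹ ^ p * J ^ p := fun J =>
          ENNReal.mul_rpow_of_nonneg _ _ hp0.le
        simp_rw [hs]
        rw [lintegral_const_mul' _ _ (ENNReal.rpow_ne_top_of_nonneg hp0.le (by norm_num)),
          ENNReal.mul_rpow_of_nonneg _ _ (by positivity), ← ENNReal.rpow_mul,
          mul_one_div_cancel hp0.ne', ENNReal.rpow_one]
    _ ≤ 2⁻¹ * (∫⁻ x, C ^ (p - 1) * ∫⁻ t, c t * (‖Δ (x + t)‖₊ : ℝ≥0∞) ^ p ∂μ ∂μ) ^ (1/p) := by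
        refine mul_le_mul_right (ENNReal.rpow_le_rpow (lintegral_mono fun x => ?_)
          (by positivity)) _
        exact jensen_weighted μ c _ hcm.aemeasurable (hHm x) hp
    _ = 2⁻¹ * (C ^ (p - 1) * (C * W)) ^ (1/p) := by
        congr 2
        rw [lintegral_const_mul' _ _ (ENNReal.rpow_ne_top_of_nonneg (by linarith) hCt)]
        congr 1
        rw [lintegral_lintegral_swap hprodm]
        have hinner : ∀ t, ∫⁻ x, c t * (‖Δ (x + t)‖₊ : ℝ≥0∞) ^ p ∂μ = c t * W := by
          intro t
          rw [lintegral_const_mul' _ _ ENNReal.coe_ne_top, hWdef]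
          congr 1
          exact (measurePreserving_add_right μ t).lintegral_comp_emb
            (MeasurableEquiv.addRight t).measurableEmbedding
            (fun y => (‖Δ y‖₊ : ℝ≥0∞) ^ p)
        simp_rw [hinner]
        rw [lintegral_mul_const'' _ hcm.aemeasurable]
    _ = 2⁻¹ * C * W ^ (1/p) := by
        have h1 : C ^ (p-1) * (C * W) = C ^ p * W := by
          rw [← mul_assoc]
          congr 1
          calc C ^ (p-1) * C = C ^ (p-1) * C ^ (1:ℝ) := by rw [ENNReal.rpow_one]
            _ = C ^ (p-1+1) := (ENNReal.rpow_add_of_nonneg _ _ (by linarith) zero_le_one).symm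
            _ = C ^ p := by norm_num
        rw [h1, ENNReal.mul_rpow_of_nonneg _ _ (by positivity), ← ENNReal.rpow_mul,
          mul_one_div_cancel hp0.ne', ENNReal.rpow_one, mul_assoc]
    _ ≤ 2⁻¹ * C * omegaMod q f ((2:ℝ) ^ (-(n:ℤ))) := by
        refine mul_le_mul_right ?_ _
        rw [hWe]; exact hW
    _ = eLpNorm g 1 μ * omegaMod q f ((2:ℝ) ^ (-(n:ℤ))) / 2 := by
        rw [hC, div_eq_mul_inv]
        ring
end
end
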